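/- arXiv:2409.14492 — 2 statements merged into one kernel-verified Lean document; each statement's English description precedes it below -/
import Mathlib

section
/- Let c ∈ ℂ with c ≠ 0 and let a ≤ b be real numbers such that Re( c · e^{iθ} ) ≥ 0 for every θ ∈ [a, b]. Then for every ε with 0 < ε < (b − a)/2 and every z = r e^{iθ} with r > 0 and θ ∈ [a + ε, b − ε], one has Re( c z ) ≥ |z| · |c| · sin ε. (This is the geometric content of Lemma 3.1(i): taking c = ω_j − λ, where λ̄ lies in the convex hull of the conjugated leading coefficients and ω̄_j is a vertex whose adjacent critical directions bound [a, b], it yields Re((ω_j − λ)z) ≥ |z|·|ω_j − λ|·sin ε for z in the sector S_j(ε).) -/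
/-- geometric content of Lemma 3.1(i). If `c ≠ 0` and
`Re(c e^{iθ}) ≥ 0` for all `θ ∈ [a, b]`, then for `0 < ε < (b-a)/2` and any
`z = r e^{iθ}` with `r > 0` and `θ ∈ [a+ε, b-ε]` one has
`Re(cz) ≥ |z| · |c| · sin ε`. -/
theorem stmt_7 (c : ℂ) (hc : c ≠ 0) (a b : ℝ) (hab : a ≤ b)
    (hpos : ∀ θ ∈ Set.Icc a b, 0 ≤ (c * Complex.exp (θ * Complex.I)).re)
    (ε : ℝ) (hε0 : 0 < ε) (hε : ε < (b - a) / 2)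
    (r θ : ℝ) (hr : 0 < r) (hθ : θ ∈ Set.Icc (a + ε) (b - ε)) :
    ‖(r : ℂ) * Complex.exp (θ * Complex.I)‖ * ‖c‖ * Real.sin ε ≤
      (c * ((r : ℂ) * Complex.exp (θ * Complex.I))).re := by
  obtain ⟨h1, h2⟩ := hθ
  set w : ℂ := c * Complex.exp (θ * Complex.I) with hw
  have h0 : 0 ≤ w.re := hpos θ ⟨by linarith, by linarith⟩
  have hp : 0 ≤ (c * Complex.exp ((θ + ε : ℝ) * Complex.I)).re :=
    hpos _ ⟨by linarith, by linarith⟩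
  have hm : 0 ≤ (c * Complex.exp ((θ - ε : ℝ) * Complex.I)).re :=
    hpos _ ⟨by linarith, by linarith⟩
  have ep : (c * Complex.exp ((θ + ε : ℝ) * Complex.I)).re
      = w.re * Real.cos ε - w.im * Real.sin ε := by
    rw [Complex.ofReal_add, add_mul, Complex.exp_add, ← mul_assoc, ← hw,
      Complex.exp_mul_I]
    simp [Complex.mul_re, Complex.add_re, Complex.add_im, Complex.mul_im,
      Complex.cos_ofReal_re, Complex.sin_ofReal_re]
  have em : (c * Complex.exp ((θ - ε : ℝ) * Complex.I)).re
      = w.re * Real.cos ε + w.im * Real.sin ε := by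
    rw [Complex.ofReal_sub, sub_mul, Complex.exp_sub, ← mul_div_assoc, ← hw,
      div_eq_mul_inv, ← Complex.exp_neg,
      show -(↑ε * Complex.I) = (↑(-ε) : ℂ) * Complex.I by push_cast; ring,
      Complex.exp_mul_I]
    simp [Complex.mul_re, Complex.add_re, Complex.add_im, Complex.mul_im,
      Complex.cos_ofReal_re, Complex.sin_ofReal_re, Real.cos_neg, Real.sin_neg]
  rw [ep] at hp
  rw [em] at hm
  have habs : ‖w‖ = ‖c‖ := by
    rw [hw, norm_mul, Complex.norm_exp_ofReal_mul_I, mul_one]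
  have habsz : ‖(r : ℂ) * Complex.exp (θ * Complex.I)‖ = r := by
    rw [norm_mul, Complex.norm_exp_ofReal_mul_I, mul_one, Complex.norm_real, Real.norm_eq_abs,
      abs_of_pos hr]
  have hre : (c * ((r : ℂ) * Complex.exp (θ * Complex.I))).re = r * w.re := by
    rw [show c * ((r : ℂ) * Complex.exp (θ * Complex.I)) = (r : ℂ) * w by rw [hw]; ring,
      Complex.re_ofReal_mul]
  rw [habsz, hre, ← habs]
  have key : ‖w‖ * Real.sin ε ≤ w.re := by
    rcases le_or_gt (Real.sin ε) 0 with hs | hs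
    · nlinarith [norm_nonneg w]
    · have hsq : ‖w‖ ^ 2 = w.re ^ 2 + w.im ^ 2 := by
        rw [Complex.sq_norm, Complex.normSq_apply]; ring
      nlinarith [Real.sin_sq_add_cos_sq ε, norm_nonneg w, mul_nonneg hp hm,
        sq_nonneg (w.re - ‖w‖ * Real.sin ε)]
  nlinarith [norm_nonneg w]
end

section
/- Let s ≥ 1 be an integer, let 0 ≤ α < 1, and let η ∈ ℝ. Then there exists R > 0 such that for every z ∈ ℂ with |z| ≥ R for which z^s lies in the (one-sided) parabolic strip of aperture α along the ray of argument sη, i.e. Re( e^{−i s η} z^s ) > 0 and |Im( e^{−i s η} z^s )| < |z|^{s α}, there exists k ∈ {1, …, s} such that z lies in the parabolic strip of aperture α along the ray of argument η + 2kπ/s, i.e. Re( e^{−i(η + 2kπ/s)} z ) > 0 and |Im( e^{−i(η + 2kπ/s)} z )| < |z|^{α}. -/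
/-- For `|x| ≤ π`, `|sin x| = sin |x|`. -/
lemma abs_sin_eq_sin_abs_of_abs_le_pi {x : ℝ} (hx : |x| ≤ Real.pi) :
    |Real.sin x| = Real.sin |x| := by
  rcases le_or_gt 0 x with h | h
  · rw [abs_of_nonneg h, abs_of_nonneg
      (Real.sin_nonneg_of_nonneg_of_le_pi h (by rwa [abs_of_nonneg h] at hx))]
  · have hx' : -x ≤ Real.pi := by rwa [abs_of_neg h] at hx
    have hnn : 0 ≤ Real.sin (-x) := Real.sin_nonneg_of_nonneg_of_le_pi (by linarith) hx'
    rw [Real.sin_neg] at hnn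
    rw [abs_of_neg h, Real.sin_neg, abs_of_nonpos (by linarith)]

/-- Lemma 3.5, Droletz. Let `s ≥ 1`, `0 ≤ α < 1`, `η ∈ ℝ`. For all
sufficiently large `|z|`, if `z^s` lies in the parabolic strip of aperture `α` along the ray
of argument `sη`, then `z` lies in one of the parabolic strips of aperture `α` along the
rays of argument `η + 2kπ/s`, `k = 1, …, s`. -/
theorem stmt_9 (s : ℕ) (hs : 1 ≤ s) (α : ℝ) (hα0 : 0 ≤ α) (hα1 : α < 1) (η : ℝ) :
    ∃ R > (0 : ℝ), ∀ z : ℂ, R ≤ ‖z‖ →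
      0 < (Complex.exp (-((s : ℂ) * η) * Complex.I) * z ^ s).re →
      |(Complex.exp (-((s : ℂ) * η) * Complex.I) * z ^ s).im| <
        ‖z‖ ^ ((s : ℝ) * α) →
      ∃ k ∈ Finset.Icc 1 s,
        0 < (Complex.exp (-((η : ℂ) + 2 * k * Real.pi / s) * Complex.I) * z).re ∧
        |(Complex.exp (-((η : ℂ) + 2 * k * Real.pi / s) * Complex.I) * z).im| <
          ‖z‖ ^ α := by
  have hπ : (0:ℝ) < Real.pi := Real.pi_pos
  have hsR : (1:ℝ) ≤ (s:ℝ) := by exact_mod_cast hs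
  have hs0 : (s:ℝ) ≠ 0 := by positivity
  refine ⟨1, one_pos, fun z hz hre him => ?_⟩
  set a := ‖z‖ with ha
  have ha1 : (1:ℝ) ≤ a := hz
  have ha0 : (0:ℝ) < a := lt_of_lt_of_le one_pos ha1
  set φ := (Complex.exp (-(η:ℂ) * Complex.I) * z).arg with hφdef
  -- u = a * exp(φ I)
  have habsu : ‖Complex.exp (-(η:ℂ) * Complex.I) * z‖ = a := by
    rw [norm_mul]
    have h1 : (-(η:ℂ) * Complex.I) = ((-η : ℝ) : ℂ) * Complex.I := by push_cast; ring
    rw [h1, Complex.norm_exp_ofReal_mul_I, one_mul]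
  have hu : Complex.exp (-(η:ℂ) * Complex.I) * z
      = (a:ℂ) * Complex.exp ((φ:ℂ) * Complex.I) := by
    conv_lhs => rw [← Complex.norm_mul_exp_arg_mul_I (Complex.exp (-(η:ℂ) * Complex.I) * z)]
    rw [habsu]
  -- z^s rewritten
  have hw : Complex.exp (-((s:ℂ) * η) * Complex.I) * z ^ s
      = ((a ^ s : ℝ) : ℂ) * Complex.exp ((((s:ℝ) * φ : ℝ) : ℂ) * Complex.I) := by
    have h1 : Complex.exp (-((s:ℂ) * η) * Complex.I)
        = Complex.exp (-(η:ℂ) * Complex.I) ^ s := by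
      rw [← Complex.exp_nat_mul]; ring_nf
    have h2 : ((s:ℂ)) * (((φ:ℝ):ℂ) * Complex.I) = (((s:ℝ) * φ : ℝ) : ℂ) * Complex.I := by
      push_cast; ring
    rw [h1, ← mul_pow, hu, mul_pow, ← Complex.exp_nat_mul, h2]
    push_cast; ring
  rw [hw, Complex.re_ofReal_mul, Complex.exp_ofReal_mul_I_re] at hre
  rw [hw, Complex.im_ofReal_mul, Complex.exp_ofReal_mul_I_im, abs_mul,
    abs_of_pos (pow_pos ha0 s)] at him
  have has : (0:ℝ) < a ^ s := pow_pos ha0 s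
  have hcos : 0 < Real.cos ((s:ℝ) * φ) := by nlinarith
  -- reduce sφ mod 2π
  set m : ℤ := round ((s:ℝ) * φ / (2 * Real.pi)) with hmdef
  set δ : ℝ := (s:ℝ) * φ - 2 * Real.pi * m with hδdef
  have hsum : (s:ℝ) * φ = δ + m * (2 * Real.pi) := by rw [hδdef]; ring
  have hδπ : |δ| ≤ Real.pi := by
    have h1 : |(s:ℝ) * φ / (2 * Real.pi) - m| ≤ 1 / 2 := abs_sub_round _
    have h2 : δ = 2 * Real.pi * ((s:ℝ) * φ / (2 * Real.pi) - m) := by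
      field_simp [hδdef]
      exact hδdef
    rw [h2, abs_mul, abs_of_pos (by positivity : (0:ℝ) < 2 * Real.pi)]
    nlinarith
  have hcosδ : Real.cos δ = Real.cos ((s:ℝ) * φ) := by
    rw [hsum, Real.cos_add_int_mul_two_pi]
  have hsinδ : Real.sin δ = Real.sin ((s:ℝ) * φ) := by
    rw [hsum, Real.sin_add_int_mul_two_pi]
  have hδ2 : |δ| < Real.pi / 2 := by
    by_contra hc
    push_neg at hc
    have : Real.cos |δ| ≤ 0 :=
      Real.cos_nonpos_of_pi_div_two_le_of_le hc (by linarith)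
    rw [Real.cos_abs, hcosδ] at this
    linarith
  -- choose k
  set r : ℤ := m % (s:ℤ) with hrdef
  have hr0 : 0 ≤ r := Int.emod_nonneg m (by exact_mod_cast hs0)
  have hrs : r < (s:ℤ) := Int.emod_lt_of_pos m (by exact_mod_cast Nat.pos_of_ne_zero (by omega))
  have hmr : ((s:ℤ)) ∣ m - r := by
    refine ⟨m / s, ?_⟩
    rw [hrdef, Int.emod_def]; ring
  set k : ℕ := if r = 0 then s else r.toNat with hkdef
  have hk1 : 1 ≤ k := by
    rw [hkdef]; split
    · exact hs
    · omega
  have hks : k ≤ s := by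
    rw [hkdef]; split
    · exact le_refl s
    · omega
  have hdvd : ((s:ℤ)) ∣ m - (k:ℤ) := by
    rw [hkdef]; split
    · rename_i h0
      rw [h0] at hmr
      simpa using dvd_sub (by simpa using hmr) (dvd_refl (s:ℤ))
    · rename_i h0
      rwa [Int.toNat_of_nonneg hr0]
  obtain ⟨j, hj⟩ := hdvd
  have hmk : (m:ℝ) - (k:ℝ) = (s:ℝ) * (j:ℝ) := by exact_mod_cast hj
  refine ⟨k, Finset.mem_Icc.mpr ⟨hk1, hks⟩, ?_⟩
  -- rewrite the target
  have hv : Complex.exp (-((η : ℂ) + 2 * k * Real.pi / s) * Complex.I) * z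
      = (a:ℂ) * Complex.exp (((φ - 2 * Real.pi * k / s : ℝ) : ℂ) * Complex.I) := by
    have e1 : (-((η : ℂ) + 2 * k * Real.pi / s) * Complex.I)
        = ((-(2 * Real.pi * k / s) : ℝ) : ℂ) * Complex.I + (-(η:ℂ) * Complex.I) := by
      push_cast; ring
    calc Complex.exp (-((η : ℂ) + 2 * k * Real.pi / s) * Complex.I) * z
        = (a:ℂ) * (Complex.exp (((-(2 * Real.pi * k / s) : ℝ):ℂ) * Complex.I) *
            Complex.exp ((φ:ℂ) * Complex.I)) := by
          rw [e1, Complex.exp_add, mul_assoc, hu]; ring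
      _ = (a:ℂ) * Complex.exp (((φ - 2 * Real.pi * k / s : ℝ) : ℂ) * Complex.I) := by
          rw [← Complex.exp_add]; congr 1; push_cast; ring
  have hangle : φ - 2 * Real.pi * k / s = δ / s + (j:ℝ) * (2 * Real.pi) := by
    have hk' : (k:ℝ) = (m:ℝ) - (s:ℝ) * j := by linarith
    rw [hk', hδdef]
    field_simp
    ring
  rw [hv, Complex.re_ofReal_mul, Complex.exp_ofReal_mul_I_re,
    Complex.im_ofReal_mul, Complex.exp_ofReal_mul_I_im, hangle,
    Real.cos_add_int_mul_two_pi, Real.sin_add_int_mul_two_pi]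
  have hδs : |δ / s| ≤ |δ| := by
    rw [abs_div, abs_of_pos (by linarith : (0:ℝ) < (s:ℝ))]
    exact div_le_self (abs_nonneg δ) hsR
  have hmem := abs_lt.mp (lt_of_le_of_lt hδs hδ2)
  constructor
  · exact mul_pos ha0 (Real.cos_pos_of_mem_Ioo ⟨hmem.1, hmem.2⟩)
  · have hsin1 : |Real.sin (δ / s)| ≤ |Real.sin δ| := by
      rw [abs_sin_eq_sin_abs_of_abs_le_pi (le_trans hδs hδπ),
        abs_sin_eq_sin_abs_of_abs_le_pi hδπ]
      exact Real.sin_le_sin_of_le_of_le_pi_div_two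
        (by linarith [abs_nonneg (δ / (s:ℝ))]) (le_of_lt hδ2) hδs
    calc |a * Real.sin (δ / s)| = a * |Real.sin (δ / s)| := by
          rw [abs_mul, abs_of_pos ha0]
      _ ≤ a * |Real.sin ((s:ℝ) * φ)| := by
          rw [← hsinδ]
          exact mul_le_mul_of_nonneg_left hsin1 (le_of_lt ha0)
      _ = a ^ ((1:ℝ) - s) * (a ^ s * |Real.sin ((s:ℝ) * φ)|) := by
          rw [← mul_assoc, ← Real.rpow_natCast a s, ← Real.rpow_add ha0,
            (show (1:ℝ) - (s:ℝ) + (s:ℝ) = 1 by ring), Real.rpow_one]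
      _ < a ^ ((1:ℝ) - s) * a ^ ((s:ℝ) * α) :=
          mul_lt_mul_of_pos_left him (Real.rpow_pos_of_pos ha0 _)
      _ = a ^ ((1:ℝ) - s + (s:ℝ) * α) := (Real.rpow_add ha0 _ _).symm
      _ ≤ a ^ α := by
          have hexp : (1:ℝ) - s + (s:ℝ) * α ≤ α := by
            have h1 : (0:ℝ) ≤ ((s:ℝ) - 1) * (1 - α) :=
              mul_nonneg (by linarith) (by linarith)
            nlinarith
          exact Real.rpow_le_rpow_of_exponent_le ha1 hexp
end
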